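/- ∑_{k=1}^∞ 1/((2k)⁶(2k+1)⁶) = −462 + 21π² + 42·ζ(3) + 252·log 2 + 7π⁴/30 + π⁶/945 + (45/8)·ζ(5). -/

import Mathlib

open Real Filter Finset

-- bernoulli' 5 and 6
theorem my_bernoulli'_five : bernoulli' 5 = 0 := by
  have h2 : Nat.choose 5 2 = 10 := by decide
  have h3 : Nat.choose 5 3 = 10 := by decide
  rw [bernoulli'_def]
  norm_num [Finset.sum_range_succ, h2, h3]

theorem my_bernoulli'_six : bernoulli' 6 = 1 / 42 := by
  have h2 : Nat.choose 6 2 = 15 := by decide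
  have h3 : Nat.choose 6 3 = 20 := by decide
  have h4 : Nat.choose 6 4 = 15 := by decide
  rw [bernoulli'_def]
  norm_num [Finset.sum_range_succ, h2, h3, h4, my_bernoulli'_five]

theorem my_hasSum_zeta_six : HasSum (fun n : ℕ => (1 : ℝ) / (n : ℝ) ^ 6) (π ^ 6 / 945) := by
  convert hasSum_zeta_nat (three_ne_zero) using 1
  norm_num
  rw [bernoulli_eq_bernoulli'_of_ne_one (by norm_num), my_bernoulli'_six]
  norm_num [Nat.factorial]
  ring
open Real Filter Finset Topology

theorem my_harmonic_real (n : ℕ) :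
    (harmonic n : ℝ) = ∑ i ∈ Finset.range n, (1 / ((i : ℝ) + 1)) := by
  rw [harmonic]
  push_cast
  simp [one_div]

theorem my_partial_sum (n : ℕ) :
    ∑ k ∈ Finset.range n, (1 / (2 * (k : ℝ) + 1) - 1 / (2 * (k : ℝ) + 2))
      = (harmonic (2 * n) : ℝ) - harmonic n := by
  induction n with
  | zero => simp
  | succ m ih =>
    rw [Finset.sum_range_succ, ih, show 2 * (m + 1) = 2 * m + 1 + 1 by ring,
      harmonic_succ, harmonic_succ, harmonic_succ]
    push_cast
    field_simp
    ring

theorem my_hasSum_log_two :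
    HasSum (fun k : ℕ => 1 / (2 * (k : ℝ) + 1) - 1 / (2 * (k : ℝ) + 2)) (Real.log 2) := by
  rw [hasSum_iff_tendsto_nat_of_nonneg]
  · have h2 : Tendsto (fun n : ℕ => 2 * n) atTop atTop :=
      tendsto_atTop_atTop_of_monotone (fun a b h => by omega) (fun b => ⟨b, by omega⟩)
    have hT := tendsto_harmonic_sub_log
    have hcomp := hT.comp h2
    have key : Tendsto (fun n : ℕ =>
        ((harmonic (2 * n) : ℝ) - Real.log (2 * n)) - ((harmonic n : ℝ) - Real.log n)
          + Real.log 2) atTop (𝓝 (Real.log 2)) := by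
      have := (hcomp.sub hT).add_const (Real.log 2)
      simpa using this
    apply key.congr'
    filter_upwards [eventually_ge_atTop 1] with n hn
    have hn0 : (n : ℝ) ≠ 0 := by positivity
    rw [my_partial_sum]
    have hl : Real.log (2 * (n : ℝ)) = Real.log 2 + Real.log n := Real.log_mul two_ne_zero hn0
    rw [hl]
    ring
  · intro k
    have h1 : (0 : ℝ) < 2 * (k : ℝ) + 1 := by positivity
    have : 1 / (2 * (k : ℝ) + 2) ≤ 1 / (2 * (k : ℝ) + 1) :=
      one_div_le_one_div_of_le h1 (by linarith)
    linarith

theorem my_hasSum_telescope :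
    HasSum (fun k : ℕ => 1 / (2 * (k : ℝ) + 1) - 1 / (2 * (k : ℝ) + 3)) 1 := by
  rw [hasSum_iff_tendsto_nat_of_nonneg]
  · have : ∀ n : ℕ, ∑ k ∈ Finset.range n, (1 / (2 * (k : ℝ) + 1) - 1 / (2 * (k : ℝ) + 3))
        = 1 - 1 / (2 * (n : ℝ) + 1) := by
      intro n
      have h := Finset.sum_range_sub' (f := fun k : ℕ => 1 / (2 * (k : ℝ) + 1)) n
      calc ∑ k ∈ Finset.range n, (1 / (2 * (k : ℝ) + 1) - 1 / (2 * (k : ℝ) + 3))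
          = ∑ k ∈ Finset.range n,
            ((fun k : ℕ => 1 / (2 * (k : ℝ) + 1)) k - (fun k : ℕ => 1 / (2 * (k : ℝ) + 1)) (k + 1)) :=
            Finset.sum_congr rfl (fun i _ => by push_cast; ring_nf)
        _ = 1 / (2 * (0 : ℕ) + 1) - 1 / (2 * (n : ℝ) + 1) := by rw [h]
        _ = 1 - 1 / (2 * (n : ℝ) + 1) := by norm_num
    simp_rw [this]
    have h1 : Tendsto (fun n : ℕ => 2 * (n : ℝ) + 1) atTop atTop :=
      tendsto_atTop_add_const_right _ 1 (tendsto_natCast_atTop_atTop.const_mul_atTop two_pos)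
    have h0 : Tendsto (fun n : ℕ => 1 / (2 * (n : ℝ) + 1)) atTop (𝓝 0) := by
      simpa [one_div, Pi.inv_def] using h1.inv_tendsto_atTop
    simpa using tendsto_const_nhds.sub h0
  · intro k
    have h1 : (0 : ℝ) < 2 * (k : ℝ) + 1 := by positivity
    have : 1 / (2 * (k : ℝ) + 3) ≤ 1 / (2 * (k : ℝ) + 1) :=
      one_div_le_one_div_of_le h1 (by linarith)
    linarith

theorem my_hasSum_one_sub_log_two :
    HasSum (fun k : ℕ => 1 / (2 * (k : ℝ) + 2) - 1 / (2 * (k : ℝ) + 3)) (1 - Real.log 2) := by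
  have := my_hasSum_telescope.sub my_hasSum_log_two
  convert this using 2 with k
  · rfl
  ring
open Real Filter Finset Topology

theorem my_even (j : ℕ) {a : ℝ} (h : HasSum (fun n : ℕ => 1 / ((n : ℝ) + 1) ^ j) a) :
    HasSum (fun k : ℕ => 1 / (2 * (k : ℝ) + 2) ^ j) (a / 2 ^ j) := by
  have h2 := h.mul_left ((1 : ℝ) / 2 ^ j)
  convert h2 using 1
  · rfl
  · funext k
    rw [show 2 * (k : ℝ) + 2 = 2 * ((k : ℝ) + 1) by ring, div_mul_div_comm, one_mul, ← mul_pow]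
  · rw [mul_comm, mul_one_div]

theorem my_odd (j : ℕ) {a : ℝ} (h : HasSum (fun n : ℕ => 1 / ((n : ℝ) + 1) ^ j) a) :
    HasSum (fun k : ℕ => 1 / (2 * (k : ℝ) + 3) ^ j) (a - a / 2 ^ j - 1) := by
  have hg : Summable (fun k : ℕ => 1 / (2 * (k : ℝ) + 1) ^ j) := by
    have hs := h.summable.comp_injective (i := fun k : ℕ => 2 * k)
      (mul_right_injective₀ (by norm_num : (2 : ℕ) ≠ 0))
    apply hs.congr
    intro k
    simp only [Function.comp]
    push_cast
    ring_nf
  have hE : HasSum (fun k : ℕ => 1 / (2 * (k : ℝ) + 1) ^ j)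
      (∑' k : ℕ, 1 / (2 * (k : ℝ) + 1) ^ j) := hg.hasSum
  set E := ∑' k : ℕ, 1 / (2 * (k : ℝ) + 1) ^ j with hEdef
  have hodd := my_even j h
  have htot : HasSum (fun n : ℕ => 1 / ((n : ℝ) + 1) ^ j) (E + a / 2 ^ j) := by
    apply HasSum.even_add_odd
    · convert hE using 2 with k
      push_cast
      ring_nf
    · convert hodd using 2 with k
      push_cast
      ring_nf
  have key : a - a / 2 ^ j - 1 = E - 1 := by
    have := h.unique htot
    linarith
  rw [key]
  have hshift : HasSum (fun k : ℕ => (fun k : ℕ => 1 / (2 * (k : ℝ) + 1) ^ j) (k + 1))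
      (E - 1) := by
    have h1 : (E - 1) + ∑ i ∈ Finset.range 1, 1 / (2 * (i : ℝ) + 1) ^ j = E := by simp
    exact (hasSum_nat_add_iff (f := fun k : ℕ => 1 / (2 * (k : ℝ) + 1) ^ j) 1).mpr
      (by rw [h1]; exact hE)
  convert hshift using 2 with k
  push_cast
  ring_nf

theorem my_shift {j : ℕ} (hj : j ≠ 0) {a : ℝ}
    (h : HasSum (fun n : ℕ => 1 / (n : ℝ) ^ j) a) :
    HasSum (fun n : ℕ => 1 / ((n : ℝ) + 1) ^ j) a := by
  have h1 : HasSum (fun n : ℕ => (1 : ℝ) / (((n + 1 : ℕ)) : ℝ) ^ j) a := by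
    rw [hasSum_nat_add_iff (f := fun n : ℕ => (1 : ℝ) / (n : ℝ) ^ j) 1]
    simpa [zero_pow hj] using h
  convert h1 using 2 with n
  push_cast
  ring_nf

theorem stmt_17 :
    ∑' k : ℕ, (1 : ℝ) / ((2 * ((k : ℝ) + 1)) ^ 6 * (2 * ((k : ℝ) + 1) + 1) ^ 6)
      = -462 + 21 * Real.pi ^ 2 + 42 * (∑' n : ℕ, (1 : ℝ) / ((n : ℝ) + 1) ^ 3)
        + 252 * Real.log 2 + 7 * Real.pi ^ 4 / 30 + Real.pi ^ 6 / 945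
        + (45 / 8) * (∑' n : ℕ, (1 : ℝ) / ((n : ℝ) + 1) ^ 5) := by
  have hb2 : HasSum (fun n : ℕ => 1 / ((n : ℝ) + 1) ^ 2) (π ^ 2 / 6) :=
    my_shift two_ne_zero hasSum_zeta_two
  have hb4 : HasSum (fun n : ℕ => 1 / ((n : ℝ) + 1) ^ 4) (π ^ 4 / 90) :=
    my_shift (by norm_num) hasSum_zeta_four
  have hb6 : HasSum (fun n : ℕ => 1 / ((n : ℝ) + 1) ^ 6) (π ^ 6 / 945) :=
    my_shift (by norm_num) my_hasSum_zeta_six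
  have hs3 : Summable (fun n : ℕ => 1 / ((n : ℝ) + 1) ^ 3) := by
    have h0 := summable_one_div_nat_pow.mpr (show 1 < 3 by norm_num)
    exact ((summable_nat_add_iff 1).mpr h0).congr fun n => by push_cast; ring_nf
  have hs5 : Summable (fun n : ℕ => 1 / ((n : ℝ) + 1) ^ 5) := by
    have h0 := summable_one_div_nat_pow.mpr (show 1 < 5 by norm_num)
    exact ((summable_nat_add_iff 1).mpr h0).congr fun n => by push_cast; ring_nf
  have hb3 := hs3.hasSum
  have hb5 := hs5.hasSum
  set Z3 := ∑' n : ℕ, (1 : ℝ) / ((n : ℝ) + 1) ^ 3 with hZ3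
  set Z5 := ∑' n : ℕ, (1 : ℝ) / ((n : ℝ) + 1) ^ 5 with hZ5
  have HC := ((((((((((my_hasSum_one_sub_log_two.mul_left (-252)).add
    ((my_even 2 hb2).mul_left 126)).add ((my_odd 2 hb2).mul_left 126)).add
    ((my_even 3 hb3).mul_left (-56))).add ((my_odd 3 hb3).mul_left 56)).add
    ((my_even 4 hb4).mul_left 21)).add ((my_odd 4 hb4).mul_left 21)).add
    ((my_even 5 hb5).mul_left (-6))).add ((my_odd 5 hb5).mul_left 6)).add
    (my_even 6 hb6)).add (my_odd 6 hb6)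
  have H : HasSum (fun k : ℕ =>
      (1 : ℝ) / ((2 * ((k : ℝ) + 1)) ^ 6 * (2 * ((k : ℝ) + 1) + 1) ^ 6))
      (-252 * (1 - Real.log 2)
        + 126 * (π ^ 2 / 6 / 2 ^ 2) + 126 * (π ^ 2 / 6 - π ^ 2 / 6 / 2 ^ 2 - 1)
        + (-56) * (Z3 / 2 ^ 3) + 56 * (Z3 - Z3 / 2 ^ 3 - 1)
        + 21 * (π ^ 4 / 90 / 2 ^ 4) + 21 * (π ^ 4 / 90 - π ^ 4 / 90 / 2 ^ 4 - 1)
        + (-6) * (Z5 / 2 ^ 5) + 6 * (Z5 - Z5 / 2 ^ 5 - 1)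
        + (π ^ 6 / 945 / 2 ^ 6) + (π ^ 6 / 945 - π ^ 6 / 945 / 2 ^ 6 - 1)) := by
    convert HC using 1
    · rfl
    · funext k
      have h1 : (2 * (k : ℝ) + 2) ≠ 0 := by positivity
      have h2 : (2 * (k : ℝ) + 3) ≠ 0 := by positivity
      have h3 : (2 * ((k : ℝ) + 1)) ≠ 0 := by positivity
      have h4 : (2 * ((k : ℝ) + 1) + 1) ≠ 0 := by positivity
      field_simp
      ring
  rw [H.tsum_eq]
  ring
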